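/- arXiv:1304.1681 — 6 statements merged into one kernel-verified Lean document; each statement's English description precedes it below -/
import Mathlib

section
/- Every point of I = (0,1]×{0} is an inaccessible boundary point of Ψ: for every a ∈ (0,1] there is no continuous map γ : [0,1] → ℝ² with γ(1) = (a,0) and γ([0,1)) ⊆ Ψ. -/
noncomputable section
open Set Metric Filter Topology

abbrev E2 := EuclideanSpace ℝ (Fin 2)
abbrev E3 := EuclideanSpace ℝ (Fin 3)

/-- The point (a,b) in the Euclidean plane. -/
def pt (a b : ℝ) : E2 := (WithLp.equiv 2 (Fin 2 → ℝ)).symm ![a, b]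
def pt3 (a b c : ℝ) : E3 := (WithLp.equiv 2 (Fin 3 → ℝ)).symm ![a, b, c]

/-- The topologist's comb. -/
def Psi : Set E2 :=
  {x : E2 | x 0 ∈ Ioo (-1 : ℝ) 1 ∧ x 1 ∈ Ioo (0 : ℝ) 2} \
    ⋃ j : ℕ, {x : E2 | x 0 ∈ Icc (0 : ℝ) 1 ∧ x 1 = 2 ^ (-(j : ℤ))}

def theta (j : ℕ) : ℝ := 2 ^ (-(j : ℤ))
/-- For t ∈ (2^{-j}, 2^{1-j}), jIdx t = j. -/
def jIdx (t : ℝ) : ℕ := ⌈-Real.logb 2 t⌉₊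

/-- The folding map into ℝ³ used to define the extended metric. -/
def F (x : E2) : E3 :=
  if x 0 ≤ 0 then pt3 (x 0) (x 1) 0
  else pt3 (x 0 * Real.cos (theta (jIdx (x 1)))) (x 1) (x 0 * Real.sin (theta (jIdx (x 1))))

def distExt (x y : E2) : ℝ := dist (F x) (F y)

/-- The Mazurkiewicz distance on the comb. -/
def dM (x y : E2) : ℝ :=
  sInf {d : ℝ | ∃ E : Set E2, E ⊆ Psi ∧ IsConnected E ∧ x ∈ E ∧ y ∈ E ∧ d = Metric.diam E}

theorem comb_inaccessible (a : ℝ) (ha : a ∈ Ioc (0 : ℝ) 1) :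
    ¬ ∃ γ : Set.Icc (0 : ℝ) 1 → E2, Continuous γ ∧ γ ⟨1, by norm_num⟩ = pt a 0 ∧
      ∀ t : Set.Icc (0 : ℝ) 1, (t : ℝ) < 1 → γ t ∈ Psi := by
  rintro ⟨γ, hγc, hγ1, hγΨ⟩
  set δ : ℝ → E2 := Set.IccExtend zero_le_one γ with hδdef
  have hδc : Continuous δ := hγc.comp continuous_projIcc
  have hδ1 : δ 1 = pt a 0 := by
    rw [hδdef, Set.IccExtend_of_mem zero_le_one γ (by norm_num : (1:ℝ) ∈ Icc (0:ℝ) 1)]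
    exact hγ1
  have hδΨ : ∀ t : ℝ, t ∈ Ico (0:ℝ) 1 → δ t ∈ Psi := by
    intro t ht
    have htm : t ∈ Icc (0:ℝ) 1 := ⟨ht.1, ht.2.le⟩
    rw [hδdef, Set.IccExtend_of_mem zero_le_one γ htm]
    exact hγΨ ⟨t, htm⟩ ht.2
  -- coordinates
  have hpt0 : (pt a 0) 0 = a := by
    simp [pt, WithLp.equiv_symm_apply, PiLp.toLp_apply]
  have hpt1 : (pt a 0) 1 = 0 := by
    simp [pt, WithLp.equiv_symm_apply, PiLp.toLp_apply]
  have hg : Continuous fun t : ℝ => δ t 0 := (continuous_apply (0 : Fin 2)).comp ((PiLp.continuous_ofLp 2 _).comp hδc)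
  have hf : Continuous fun t : ℝ => δ t 1 := (continuous_apply (1 : Fin 2)).comp ((PiLp.continuous_ofLp 2 _).comp hδc)
  -- find ε such that first coordinate positive on ball around 1
  have hU : {t : ℝ | 0 < δ t 0} ∈ 𝓝 (1:ℝ) := by
    have : ContinuousAt (fun t : ℝ => δ t 0) 1 := hg.continuousAt
    have h1 : 0 < δ 1 0 := by rw [hδ1, hpt0]; exact ha.1
    exact this (Ioi_mem_nhds h1)
  obtain ⟨ε, hε, hball⟩ := Metric.mem_nhds_iff.mp hU
  set t₀ : ℝ := max 0 (1 - ε/2) with ht₀def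
  have ht₀0 : 0 ≤ t₀ := le_max_left _ _
  have ht₀1 : t₀ < 1 := by
    apply max_lt one_pos; linarith
  have hdist : ∀ t : ℝ, t ∈ Icc t₀ 1 → 0 < δ t 0 := by
    intro t ht
    apply hball
    rw [Metric.mem_ball, Real.dist_eq, abs_sub_lt_iff]
    constructor
    · linarith [ht.2]
    · have : 1 - ε/2 ≤ t₀ := le_max_right _ _
      have := ht.1
      linarith
  have hmem₀ : δ t₀ ∈ Psi := hδΨ t₀ ⟨ht₀0, ht₀1⟩
  set c : ℝ := δ t₀ 1 with hcdef
  have hc : 0 < c := hmem₀.1.2.1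
  obtain ⟨j, hj⟩ := exists_pow_lt_of_lt_one hc (by norm_num : (1/2 : ℝ) < 1)
  set y : ℝ := 2 ^ (-(j : ℤ)) with hydef
  have hy : y = (1/2 : ℝ) ^ j := by
    rw [hydef, zpow_neg, zpow_natCast, ← inv_pow, one_div]
  have hy0 : 0 < y := by rw [hy]; positivity
  have hyc : y < c := by rw [hy]; exact hj
  -- IVT
  have := intermediate_value_Icc' ht₀1.le (hf.continuousOn (s := Icc t₀ 1))
  have hyin : y ∈ Icc (δ 1 1) (δ t₀ 1) := by
    rw [hδ1, hpt1]
    exact ⟨hy0.le, hyc.le⟩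
  obtain ⟨t, ht, hty⟩ := this hyin
  have ht1 : t < 1 := by
    rcases lt_or_eq_of_le ht.2 with h | h
    · exact h
    · exfalso
      rw [h] at hty
      have h2 : δ 1 1 = y := hty
      rw [hδ1, hpt1] at h2
      exact hy0.ne h2
  have hmem : δ t ∈ Psi := hδΨ t ⟨le_trans ht₀0 ht.1, ht1⟩
  apply hmem.2
  refine mem_iUnion.mpr ⟨j, ?_, ?_⟩
  · exact ⟨(hdist t ⟨ht.1, ht.2⟩).le, hmem.1.1.2.le⟩
  · exact hty
end
end

section
/- Every point of ∂Ψ \ I is an accessible boundary point of Ψ: for every x₀ ∈ ∂Ψ with x₀ ∉ (0,1]×{0} there is a continuous map γ : [0,1] → ℝ² with γ(1) = x₀ and γ([0,1)) ⊆ Ψ. -/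
noncomputable section
open Set Metric Filter Topology

lemma mem_Psi_iff (x : E2) : x ∈ Psi ↔
    ((x 0 ∈ Ioo (-1 : ℝ) 1 ∧ x 1 ∈ Ioo (0 : ℝ) 2) ∧
      ∀ j : ℕ, ¬(x 0 ∈ Icc (0 : ℝ) 1 ∧ x 1 = 2 ^ (-(j : ℤ)))) := by
  simp only [Psi, mem_diff, mem_iUnion, mem_setOf_eq, not_exists]

lemma accessible_of_ray (x₀ : E2) (v₁ v₂ s₀ : ℝ) (hs : 0 < s₀)
    (h : ∀ s : ℝ, 0 < s → s ≤ s₀ →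
      ((x₀ 0 + s * v₁ ∈ Ioo (-1 : ℝ) 1 ∧ x₀ 1 + s * v₂ ∈ Ioo (0 : ℝ) 2) ∧
        ∀ j : ℕ, ¬(x₀ 0 + s * v₁ ∈ Icc (0 : ℝ) 1 ∧ x₀ 1 + s * v₂ = 2 ^ (-(j : ℤ))))) :
    ∃ γ : Set.Icc (0 : ℝ) 1 → E2, Continuous γ ∧ γ ⟨1, by norm_num⟩ = x₀ ∧
      ∀ t : Set.Icc (0 : ℝ) 1, (t : ℝ) < 1 → γ t ∈ Psi := by
  refine ⟨fun t => x₀ + ((1 - (t : ℝ)) * s₀) • pt v₁ v₂, ?_, ?_, ?_⟩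
  · exact continuous_const.add
      ((((continuous_const.sub continuous_subtype_val).mul continuous_const).smul
        continuous_const))
  · simp
  · intro t ht
    have hs1 : (0:ℝ) < (1 - (t : ℝ)) * s₀ := by
      have := t.2.1; nlinarith
    have hs2 : (1 - (t : ℝ)) * s₀ ≤ s₀ := by
      have := t.2.1; nlinarith
    obtain ⟨⟨h1, h2⟩, h3⟩ := h _ hs1 hs2
    have e0 : (x₀ + ((1 - (t : ℝ)) * s₀) • pt v₁ v₂) 0 = x₀ 0 + ((1 - (t : ℝ)) * s₀) * v₁ := by
      simp [pt]
    have e1 : (x₀ + ((1 - (t : ℝ)) * s₀) • pt v₁ v₂) 1 = x₀ 1 + ((1 - (t : ℝ)) * s₀) * v₂ := by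
      simp [pt]
    simp only [mem_Psi_iff, e0, e1]
    exact ⟨⟨h1, h2⟩, h3⟩

lemma two_zpow_pos (j : ℕ) : (0:ℝ) < 2 ^ (-(j:ℤ)) := by positivity

lemma two_zpow_le_one (j : ℕ) : (2:ℝ) ^ (-(j:ℤ)) ≤ 1 :=
  zpow_le_one_of_nonpos₀ one_le_two (by simp)

lemma two_zpow_anti {j k : ℕ} (h : j ≤ k) : (2:ℝ) ^ (-(k:ℤ)) ≤ 2 ^ (-(j:ℤ)) :=
  zpow_le_zpow_right₀ one_le_two (by simp [h])

/-- Above b ∈ (0,1] there is a tooth-free interval. -/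
lemma exists_dodge (b : ℝ) (hb0 : 0 < b) (hb1 : b ≤ 1) :
    ∃ s₀ : ℝ, 0 < s₀ ∧ s₀ ≤ 1/2 ∧ ∀ s : ℝ, 0 < s → s ≤ s₀ →
      b + s < 2 ∧ ∀ j : ℕ, b + s ≠ 2 ^ (-(j:ℤ)) := by
  have hex : ∃ n : ℕ, (2:ℝ) ^ (-(n:ℤ)) ≤ b := by
    obtain ⟨n, hn⟩ := exists_pow_lt_of_lt_one hb0 (by norm_num : (1/2:ℝ) < 1)
    refine ⟨n, ?_⟩; rw [zpow_neg, zpow_natCast]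
    simpa [one_div, inv_pow] using hn.le
  classical
  set n := Nat.find hex with hndef
  have hn : (2:ℝ) ^ (-(n:ℤ)) ≤ b := Nat.find_spec hex
  -- key: any tooth strictly above b has index < n
  have key : ∀ j : ℕ, b < 2 ^ (-(j:ℤ)) → j < n := by
    intro j hj
    by_contra hcon
    push_neg at hcon
    exact absurd (le_trans (two_zpow_anti hcon) hn) (not_le.mpr hj)
  rcases Nat.eq_zero_or_eq_succ_pred n with h0 | hsucc
  · -- n = 0 : b = 1, no teeth above
    have hb : (1:ℝ) ≤ b := by simpa [h0] using hn
    refine ⟨1/2, by norm_num, le_refl _, fun s hs hs' => ⟨by linarith, fun j heq => ?_⟩⟩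
    have := two_zpow_le_one j
    rw [← heq] at this; linarith
  · set k := n - 1 with hk
    have hkn : n = k + 1 := hsucc
    have hklt : ¬ (2:ℝ) ^ (-(k:ℤ)) ≤ b := Nat.find_min hex (by omega)
    push_neg at hklt
    refine ⟨min (((2:ℝ) ^ (-(k:ℤ)) - b)/2) (1/2), ?_, min_le_right _ _,
      fun s hs hs' => ?_⟩
    · exact lt_min (by linarith) (by norm_num)
    have hsa : s ≤ ((2:ℝ) ^ (-(k:ℤ)) - b)/2 := le_trans hs' (min_le_left _ _)
    have hup : b + s < 2 ^ (-(k:ℤ)) := by linarith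
    have h1 : (2:ℝ) ^ (-(k:ℤ)) ≤ 1 := two_zpow_le_one k
    refine ⟨by linarith, fun j heq => ?_⟩
    have hjlt : j < n := key j (by rw [← heq]; linarith)
    have : (2:ℝ) ^ (-(k:ℤ)) ≤ 2 ^ (-(j:ℤ)) := two_zpow_anti (by omega)
    rw [← heq] at this; linarith

theorem comb_accessible (x₀ : E2) (hx : x₀ ∈ frontier Psi)
    (hxI : ¬ (x₀ 0 ∈ Ioc (0 : ℝ) 1 ∧ x₀ 1 = 0)) :
    ∃ γ : Set.Icc (0 : ℝ) 1 → E2, Continuous γ ∧ γ ⟨1, by norm_num⟩ = x₀ ∧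
      ∀ t : Set.Icc (0 : ℝ) 1, (t : ℝ) < 1 → γ t ∈ Psi := by
  -- x₀ lies in the closed rectangle
  have hrect : x₀ ∈ {x : E2 | x 0 ∈ Icc (-1:ℝ) 1 ∧ x 1 ∈ Icc (0:ℝ) 2} := by
    have hcl : IsClosed {x : E2 | x 0 ∈ Icc (-1:ℝ) 1 ∧ x 1 ∈ Icc (0:ℝ) 2} :=
      ((isClosed_Icc.preimage (PiLp.continuous_apply 2 _ 0)).inter
        (isClosed_Icc.preimage (PiLp.continuous_apply 2 _ 1)))
    have hsub : Psi ⊆ {x : E2 | x 0 ∈ Icc (-1:ℝ) 1 ∧ x 1 ∈ Icc (0:ℝ) 2} := by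
      intro x hxmem
      obtain ⟨⟨h1, h2⟩, _⟩ := (mem_Psi_iff x).mp hxmem
      exact ⟨Ioo_subset_Icc_self h1, Ioo_subset_Icc_self h2⟩
    exact closure_minimal hsub hcl (frontier_subset_closure hx)
  obtain ⟨⟨ha1, ha2⟩, hb1, hb2⟩ := hrect
  set a := x₀ 0 with hadef
  set b := x₀ 1 with hbdef
  rcases eq_or_lt_of_le hb1 with hb0 | hbpos
  · -- b = 0 ; then a ∈ [-1, 0]
    have ha0 : a ≤ 0 := by
      by_contra hcon
      push_neg at hcon
      exact hxI ⟨⟨hcon, ha2⟩, hb0.symm⟩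
    rcases le_or_gt a (-1/2) with hl | hr
    · -- a ≤ -1/2 : go up-right
      refine accessible_of_ray x₀ 1 1 (1/4) (by norm_num) (fun s hs hs' => ?_)
      refine ⟨⟨⟨by linarith, by linarith⟩, ⟨by linarith [hb0], by linarith [hb0]⟩⟩,
        fun j ⟨⟨hc1, _⟩, _⟩ => ?_⟩
      linarith
    · -- -1/2 < a ≤ 0 : go up-left
      refine accessible_of_ray x₀ (-1) 1 (1/4) (by norm_num) (fun s hs hs' => ?_)
      refine ⟨⟨⟨by linarith, by linarith⟩, ⟨by linarith [hb0], by linarith [hb0]⟩⟩,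
        fun j ⟨⟨hc1, _⟩, _⟩ => ?_⟩
      linarith
  · rcases le_or_gt b 1 with hble | hbgt
    · -- 0 < b ≤ 1 : use dodge going up
      obtain ⟨s₀, hs₀, hs₀', hdodge⟩ := exists_dodge b hbpos hble
      rcases le_or_gt 0 a with hal | har
      · refine accessible_of_ray x₀ (-1) 1 s₀ hs₀ (fun s hs hs' => ?_)
        obtain ⟨hup, hne⟩ := hdodge s hs hs'
        refine ⟨⟨⟨by linarith, by linarith⟩, ⟨by linarith, by linarith⟩⟩,
          fun j ⟨_, heq⟩ => hne j (by linarith [heq])⟩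
      · refine accessible_of_ray x₀ 1 1 s₀ hs₀ (fun s hs hs' => ?_)
        obtain ⟨hup, hne⟩ := hdodge s hs hs'
        refine ⟨⟨⟨by linarith, by linarith⟩, ⟨by linarith, by linarith⟩⟩,
          fun j ⟨_, heq⟩ => hne j (by linarith [heq])⟩
    · -- 1 < b ≤ 2 : go down
      have hs₀ : (0:ℝ) < (b-1)/2 := by linarith
      have hhalf : (b-1)/2 ≤ 1/2 := by linarith
      rcases le_or_gt 0 a with hal | har
      · refine accessible_of_ray x₀ (-1) (-1) ((b-1)/2) hs₀ (fun s hs hs' => ?_)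
        refine ⟨⟨⟨by linarith, by linarith⟩, ⟨by linarith, by linarith⟩⟩,
          fun j ⟨_, heq⟩ => ?_⟩
        have := two_zpow_le_one j
        rw [← heq] at this; linarith
      · refine accessible_of_ray x₀ 1 (-1) ((b-1)/2) hs₀ (fun s hs hs' => ?_)
        refine ⟨⟨⟨by linarith, by linarith⟩, ⟨by linarith, by linarith⟩⟩,
          fun j ⟨_, heq⟩ => ?_⟩
        have := two_zpow_le_one j
        rw [← heq] at this; linarith
end
end

section
/- Points of a tooth I_j are 'doubled' in the extended metric: for every t ∈ (0,1) and every j ≥ 1, the sequences a_n = (t, 2^{-j} + 4^{-n}) and b_n = (t, 2^{-j} − 4^{-n}) (for n large enough that both lie in Ψ) satisfy lim_{n→∞} dist_Ext(a_n,b_n) = 2t·sin(2^{-j-2}) > 0, although |a_n − b_n| → 0 in the Euclidean metric. -/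
noncomputable section
open Set Metric Filter Topology

/- ---------- auxiliary lemmas ---------- -/

lemma pt_apply_zero (a b : ℝ) : pt a b 0 = a := rfl
lemma pt_apply_one (a b : ℝ) : pt a b 1 = b := rfl

lemma logb_two_zpow (m : ℤ) : Real.logb 2 ((2:ℝ) ^ m) = m := by
  rw [← Real.rpow_intCast, Real.logb_rpow (by norm_num) (by norm_num)]

lemma jIdx_eq (k : ℕ) (hk : 1 ≤ k) {x : ℝ} (h1 : (2:ℝ) ^ (-(k:ℤ)) ≤ x)
    (h2 : x < (2:ℝ) ^ (-(k:ℤ) + 1)) : jIdx x = k := by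
  have hxpos : 0 < x := lt_of_lt_of_le (by positivity) h1
  rw [jIdx, Nat.ceil_eq_iff (by omega)]
  constructor
  · have h := Real.logb_lt_logb one_lt_two hxpos h2
    rw [logb_two_zpow] at h
    rw [Nat.cast_sub hk, Nat.cast_one]
    push_cast at h
    linarith
  · have h := Real.logb_le_logb_of_le one_lt_two (by positivity) h1
    rw [logb_two_zpow] at h
    push_cast at h
    linarith

lemma mem_Psi (a b : ℝ) (ha : a ∈ Ioo (-1:ℝ) 1) (hb : b ∈ Ioo (0:ℝ) 2)
    (hne : ∀ k : ℕ, b ≠ (2:ℝ) ^ (-(k:ℤ))) : pt a b ∈ Psi := by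
  constructor
  · exact ⟨ha, hb⟩
  · simp only [mem_iUnion, mem_setOf_eq, not_exists]
    intro k hk
    exact hne k hk.2

lemma F_pt (a b : ℝ) (ha : 0 < a) :
    F (pt a b) = pt3 (a * Real.cos (theta (jIdx b))) b (a * Real.sin (theta (jIdx b))) := by
  rw [F, pt_apply_zero, pt_apply_one, if_neg (not_le.mpr ha)]

lemma dist_pt3 (a b c a' b' c' : ℝ) :
    dist (pt3 a b c) (pt3 a' b' c') = Real.sqrt ((a-a')^2 + (b-b')^2 + (c-c')^2) := by
  rw [EuclideanSpace.dist_eq, Fin.sum_univ_three]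
  simp [pt3, Real.dist_eq, sq_abs]

lemma dist_pt (a b a' b' : ℝ) :
    dist (pt a b) (pt a' b') = Real.sqrt ((a-a')^2 + (b-b')^2) := by
  rw [EuclideanSpace.dist_eq, Fin.sum_univ_two]
  simp [pt, Real.dist_eq, sq_abs]

lemma trig_identity (t a b : ℝ) :
    (t * Real.cos a - t * Real.cos b)^2 + (t * Real.sin a - t * Real.sin b)^2
      = (2 * t * Real.sin ((a - b)/2))^2 := by
  have hpa := Real.sin_sq_add_cos_sq a
  have hpb := Real.sin_sq_add_cos_sq b
  have hph := Real.sin_sq_add_cos_sq ((a - b)/2)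
  have hc := Real.cos_sub a b
  have h2 := Real.cos_two_mul ((a - b)/2)
  rw [show 2 * ((a - b)/2) = a - b by ring] at h2
  linear_combination t^2*hpa + t^2*hpb + 2*t^2*hc - 2*t^2*h2 - 4*t^2*hph

theorem tooth_points_doubled (t : ℝ) (ht : t ∈ Ioo (0 : ℝ) 1) (j : ℕ) (hj : 1 ≤ j) :
    (∀ᶠ n in atTop, pt t ((2:ℝ) ^ (-(j:ℤ)) + (4:ℝ) ^ (-(n:ℤ))) ∈ Psi ∧
        pt t ((2:ℝ) ^ (-(j:ℤ)) - (4:ℝ) ^ (-(n:ℤ))) ∈ Psi) ∧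
    Tendsto (fun n : ℕ => distExt (pt t ((2:ℝ) ^ (-(j:ℤ)) + (4:ℝ) ^ (-(n:ℤ))))
        (pt t ((2:ℝ) ^ (-(j:ℤ)) - (4:ℝ) ^ (-(n:ℤ))))) atTop
      (𝓝 (2 * t * Real.sin ((2:ℝ) ^ (-(j:ℤ) - 2)))) ∧
    0 < 2 * t * Real.sin ((2:ℝ) ^ (-(j:ℤ) - 2)) ∧
    Tendsto (fun n : ℕ => dist (pt t ((2:ℝ) ^ (-(j:ℤ)) + (4:ℝ) ^ (-(n:ℤ))))
        (pt t ((2:ℝ) ^ (-(j:ℤ)) - (4:ℝ) ^ (-(n:ℤ))))) atTop (𝓝 0) := by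
  obtain ⟨ht0, ht1⟩ := ht
  set s : ℝ := (2:ℝ) ^ (-(j:ℤ) - 2) with hs
  -- basic power facts
  have hεeq : ∀ n : ℕ, (4:ℝ) ^ (-(n:ℤ)) = (1/4:ℝ)^n := by
    intro n
    rw [zpow_neg, zpow_natCast, one_div, inv_pow]
  have hεpos : ∀ n : ℕ, 0 < (4:ℝ) ^ (-(n:ℤ)) := fun n => by positivity
  have h0 : Tendsto (fun n : ℕ => (1/4:ℝ)^n) atTop (𝓝 0) :=
    tendsto_pow_atTop_nhds_zero_of_lt_one (by norm_num) (by norm_num)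
  have hjpos : (0:ℝ) < 2 ^ (-(j:ℤ) - 1) := by positivity
  have hsmall : ∀ᶠ n : ℕ in atTop, (1/4:ℝ)^n < 2 ^ (-(j:ℤ) - 1) :=
    h0.eventually (gt_mem_nhds hjpos)
  -- positivity of the limit
  have hslt : s < Real.pi := by
    have h1 : s ≤ (1/8:ℝ) := by
      rw [hs, show (1/8:ℝ) = 2 ^ (-3 : ℤ) by norm_num]
      exact (zpow_le_zpow_iff_right₀ (by norm_num : (1:ℝ) < 2)).mpr (by omega)
    linarith [Real.pi_gt_three]
  have hspos : (0:ℝ) < s := by positivity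
  have hsinpos : 0 < Real.sin s := Real.sin_pos_of_pos_of_lt_pi hspos hslt
  have hlimpos : 0 < 2 * t * Real.sin s := by positivity
  -- power decompositions
  have e1 : (2:ℝ) ^ (-(j:ℤ)) = 2 * 2 ^ (-(j:ℤ) - 1) := by
    rw [show (-(j:ℤ)) = 1 + (-(j:ℤ) - 1) by ring, zpow_add₀ (two_ne_zero)]
    norm_num
  have e2 : (2:ℝ) ^ (-(j:ℤ) + 1) = 4 * 2 ^ (-(j:ℤ) - 1) := by
    rw [show (-(j:ℤ) + 1) = 2 + (-(j:ℤ) - 1) by ring, zpow_add₀ (two_ne_zero)]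
    norm_num
  have e3 : (2:ℝ) ^ (-(j:ℤ) - 1) = 2 * 2 ^ (-(j:ℤ) - 2) := by
    rw [show (-(j:ℤ) - 1) = 1 + (-(j:ℤ) - 2) by ring, zpow_add₀ (two_ne_zero)]
    norm_num
  have hj2 : (2:ℝ) ^ (-(j:ℤ)) ≤ 1/2 := by
    rw [show (1/2:ℝ) = 2 ^ (-1 : ℤ) by norm_num]
    exact (zpow_le_zpow_iff_right₀ (by norm_num : (1:ℝ) < 2)).mpr (by omega)
  -- membership and jIdx for n with small ε
  have key : ∀ ε : ℝ, 0 < ε → ε < 2 ^ (-(j:ℤ) - 1) →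
      (pt t ((2:ℝ) ^ (-(j:ℤ)) + ε) ∈ Psi ∧
       pt t ((2:ℝ) ^ (-(j:ℤ)) - ε) ∈ Psi) ∧
      jIdx ((2:ℝ) ^ (-(j:ℤ)) + ε) = j ∧
      jIdx ((2:ℝ) ^ (-(j:ℤ)) - ε) = j + 1 := by
    intro ε hεp hn
    have hy1a : (2:ℝ) ^ (-(j:ℤ)) < 2 ^ (-(j:ℤ)) + ε := by linarith
    have hy1b : (2:ℝ) ^ (-(j:ℤ)) + ε < 2 ^ (-(j:ℤ) + 1) := by
      rw [e2]; rw [e1]; linarith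
    have hy2a : (2:ℝ) ^ (-(j:ℤ) - 1) < 2 ^ (-(j:ℤ)) - ε := by
      rw [e1]; linarith
    have hy2b : (2:ℝ) ^ (-(j:ℤ)) - ε < 2 ^ (-(j:ℤ)) := by linarith
    refine ⟨⟨?_, ?_⟩, ?_, ?_⟩
    · apply mem_Psi _ _ ⟨by linarith, ht1⟩
      · constructor
        · positivity
        · have h4 : (2:ℝ) ^ (-(j:ℤ) + 1) ≤ 2 ^ (0 : ℤ) := by
            apply (zpow_le_zpow_iff_right₀ (by norm_num : (1:ℝ) < 2)).mpr
            omega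
          norm_num at h4
          linarith
      · intro k hk
        have hk1 : -(j:ℤ) < -(k:ℤ) := by
          apply (zpow_lt_zpow_iff_right₀ (by norm_num : (1:ℝ) < 2)).mp
          rw [← hk]; exact hy1a
        have hk2 : -(k:ℤ) < -(j:ℤ) + 1 := by
          apply (zpow_lt_zpow_iff_right₀ (by norm_num : (1:ℝ) < 2)).mp
          rw [← hk]; exact hy1b
        omega
    · apply mem_Psi _ _ ⟨by linarith, ht1⟩
      · constructor
        · linarith
        · linarith
      · intro k hk
        have hk1 : -(j:ℤ) - 1 < -(k:ℤ) := by
          apply (zpow_lt_zpow_iff_right₀ (by norm_num : (1:ℝ) < 2)).mp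
          rw [← hk]; exact hy2a
        have hk2 : -(k:ℤ) < -(j:ℤ) := by
          apply (zpow_lt_zpow_iff_right₀ (by norm_num : (1:ℝ) < 2)).mp
          rw [← hk]; exact hy2b
        omega
    · exact jIdx_eq j hj (le_of_lt hy1a) hy1b
    · apply jIdx_eq (j+1) (by omega)
      · push_cast
        rw [show -((j:ℤ)+1) = -(j:ℤ) - 1 by ring]
        exact le_of_lt hy2a
      · push_cast
        rw [show -((j:ℤ)+1) + 1 = -(j:ℤ) by ring]
        exact hy2b
  refine ⟨?_, ?_, hlimpos, ?_⟩
  · obtain ⟨m, hm⟩ := exists_pow_lt_of_lt_one hjpos (by norm_num : (1/4:ℝ) < 1)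
    filter_upwards [eventually_ge_atTop (m:ℤ)] with n hn
    have h1 : (4:ℝ) ^ (-n) ≤ (4:ℝ) ^ (-(m:ℤ)) :=
      (zpow_le_zpow_iff_right₀ (by norm_num : (1:ℝ) < 4)).mpr (by omega)
    have h2 : (4:ℝ) ^ (-(m:ℤ)) = (1/4:ℝ)^m := by
      rw [zpow_neg, zpow_natCast, one_div, inv_pow]
    exact (key ((4:ℝ) ^ (-n)) (by positivity) (by rw [h2] at h1; linarith)).1
  · -- main tendsto
    have hformula : ∀ n : ℕ, (1/4:ℝ)^n < 2 ^ (-(j:ℤ) - 1) →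
        distExt (pt t ((2:ℝ) ^ (-(j:ℤ)) + (4:ℝ) ^ (-(n:ℤ))))
          (pt t ((2:ℝ) ^ (-(j:ℤ)) - (4:ℝ) ^ (-(n:ℤ))))
        = Real.sqrt ((2 * t * Real.sin s)^2 + (2 * (1/4:ℝ)^n)^2) := by
      intro n hn
      obtain ⟨-, hjd1, hjd2⟩ := key ((4:ℝ) ^ (-(n:ℤ))) (hεpos n) (by rw [hεeq n]; exact hn)
      rw [distExt, F_pt _ _ ht0, F_pt _ _ ht0, hjd1, hjd2, dist_pt3]
      congr 1
      have hth : theta j - theta (j+1) = 2 ^ (-(j:ℤ) - 1) := by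
        rw [theta, theta]
        push_cast
        rw [show -((j:ℤ)+1) = -(j:ℤ) - 1 by ring, e1]
        ring
      have hhalf : (theta j - theta (j+1)) / 2 = s := by
        rw [hth, e3, hs]; ring
      have := trig_identity t (theta j) (theta (j+1))
      rw [hhalf] at this
      have hd : ((2:ℝ) ^ (-(j:ℤ)) + (4:ℝ)^(-(n:ℤ)) - ((2:ℝ) ^ (-(j:ℤ)) - (4:ℝ)^(-(n:ℤ))))
          = 2 * (1/4:ℝ)^n := by
        rw [← hεeq n]; ring
      rw [hd]
      linarith [this]
    have hC : Tendsto (fun n : ℕ => Real.sqrt ((2 * t * Real.sin s)^2 + (2 * (1/4:ℝ)^n)^2))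
        atTop (𝓝 (2 * t * Real.sin s)) := by
      have h1 : Tendsto (fun n : ℕ => (2 * t * Real.sin s)^2 + (2 * (1/4:ℝ)^n)^2) atTop
          (𝓝 ((2 * t * Real.sin s)^2 + (2 * (0:ℝ))^2)) :=
        tendsto_const_nhds.add ((tendsto_const_nhds.mul h0).pow 2)
      have h2 := (Real.continuous_sqrt.tendsto _).comp h1
      simp only [Function.comp_def] at h2
      convert h2 using 2
      rw [show (2 * t * Real.sin s)^2 + (2*(0:ℝ))^2 = (2 * t * Real.sin s)^2 by ring,
        Real.sqrt_sq (le_of_lt hlimpos)]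
    exact hC.congr' (hsmall.mono (fun n hn => (hformula n hn).symm))
  · -- euclidean distance tends to 0
    have heq : ∀ n : ℕ, dist (pt t ((2:ℝ) ^ (-(j:ℤ)) + (4:ℝ) ^ (-(n:ℤ))))
        (pt t ((2:ℝ) ^ (-(j:ℤ)) - (4:ℝ) ^ (-(n:ℤ)))) = 2 * (1/4:ℝ)^n := by
      intro n
      rw [dist_pt]
      rw [show (t - t)^2 + ((2:ℝ) ^ (-(j:ℤ)) + (4:ℝ)^(-(n:ℤ)) - ((2:ℝ) ^ (-(j:ℤ)) - (4:ℝ)^(-(n:ℤ))))^2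
          = (2 * (4:ℝ)^(-(n:ℤ)))^2 by ring, Real.sqrt_sq (by positivity), hεeq n]
    simp only [heq]
    have h2' : Tendsto (fun n : ℕ => (2:ℝ) * (1/4:ℝ)^n) atTop (𝓝 (2 * 0)) :=
      tendsto_const_nhds.mul h0
    simpa using h2'
end
end

section
/- For every t ∈ (0,1), the sequence q_n = (t, 3·2^{-n-1}) of points of Ψ is a Cauchy sequence with respect to dist_Ext, and it converges in the Euclidean metric to the inaccessible boundary point (t,0) ∈ I. -/
noncomputable section
open Set Metric Filter Topology

lemma logb23_gt : (1:ℝ) < Real.logb 2 3 := by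
  rw [Real.lt_logb_iff_rpow_lt (by norm_num) (by norm_num), Real.rpow_one]; norm_num

lemma logb23_lt : Real.logb 2 3 < 2 := by
  rw [Real.logb_lt_iff_lt_rpow (by norm_num) (by norm_num),
    show (2:ℝ) = ((2:ℕ):ℝ) by norm_num, Real.rpow_natCast]
  norm_num

lemma jIdx_eq_s8 (n : ℕ) : jIdx (3 * 2 ^ (-(n:ℤ) - 1)) = n := by
  have h2 : Real.logb 2 ((2:ℝ) ^ (-(n:ℤ) - 1)) = -(n:ℤ) - 1 := by
    rw [show (2:ℝ) ^ (-(n:ℤ) - 1) = (2:ℝ) ^ ((-(n:ℤ) - 1 : ℤ) : ℝ) from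
      (Real.rpow_intCast 2 _).symm, Real.logb_rpow (by norm_num) (by norm_num)]
    push_cast; ring
  have hlog : -Real.logb 2 (3 * 2 ^ (-(n:ℤ) - 1)) = (n:ℝ) + 1 - Real.logb 2 3 := by
    rw [Real.logb_mul (by norm_num) (by positivity), h2]
    push_cast; ring
  unfold jIdx
  rw [hlog]
  rcases Nat.eq_zero_or_pos n with rfl | hn
  · simp only [Nat.cast_zero, zero_add]
    exact Nat.ceil_eq_zero.mpr (by have := logb23_gt; linarith)
  · rw [Nat.ceil_eq_iff hn.ne']
    have := logb23_gt; have := logb23_lt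
    constructor
    · push_cast [Nat.cast_sub hn]; linarith
    · linarith

lemma F_pt_s8 (t : ℝ) (ht : 0 < t) (n : ℕ) :
    F (pt t (3 * 2 ^ (-(n:ℤ) - 1))) =
      pt3 (t * Real.cos ((2:ℝ) ^ (-(n:ℤ)))) (3 * 2 ^ (-(n:ℤ) - 1))
        (t * Real.sin ((2:ℝ) ^ (-(n:ℤ)))) := by
  have h0 : (pt t (3 * 2 ^ (-(n:ℤ) - 1))) 0 = t := rfl
  have h1 : (pt t (3 * 2 ^ (-(n:ℤ) - 1))) 1 = 3 * 2 ^ (-(n:ℤ) - 1) := rfl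
  rw [F, h0, h1, if_neg (not_le.mpr ht), jIdx_eq_s8, theta]

lemma seq_tendsto : Tendsto (fun n : ℕ => (2:ℝ) ^ (-(n:ℤ))) atTop (𝓝 0) := by
  have : (fun n : ℕ => (2:ℝ) ^ (-(n:ℤ))) = fun n : ℕ => (2⁻¹ : ℝ) ^ n := by
    funext n; rw [zpow_neg, ← inv_zpow, zpow_natCast]
  rw [this]
  exact tendsto_pow_atTop_nhds_zero_of_lt_one (by norm_num) (by norm_num)

theorem cauchy_to_inaccessible (t : ℝ) (ht : t ∈ Ioo (0 : ℝ) 1) :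
    (∀ n : ℕ, pt t (3 * 2 ^ (-(n:ℤ) - 1)) ∈ Psi) ∧
    (∀ ε > (0:ℝ), ∃ N : ℕ, ∀ m ≥ N, ∀ n ≥ N,
        distExt (pt t (3 * 2 ^ (-(m:ℤ) - 1))) (pt t (3 * 2 ^ (-(n:ℤ) - 1))) < ε) ∧
    Tendsto (fun n : ℕ => pt t (3 * 2 ^ (-(n:ℤ) - 1))) atTop (𝓝 (pt t 0)) ∧
    pt t 0 ∈ {x : E2 | x 0 ∈ Ioc (0:ℝ) 1 ∧ x 1 = 0} := by
  obtain ⟨ht0, ht1⟩ := ht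
  have hcont3 : Continuous (fun s : ℝ => pt3 (t * Real.cos s) (3/2 * s) (t * Real.sin s)) := by
    apply Continuous.comp (PiLp.continuous_toLp 2 (fun _ : Fin 3 => ℝ))
    apply continuous_pi
    intro i
    fin_cases i <;> simp <;> fun_prop
  have hval : ∀ n : ℕ, (fun s : ℝ => pt3 (t * Real.cos s) (3/2 * s) (t * Real.sin s))
      ((2:ℝ) ^ (-(n:ℤ))) = F (pt t (3 * 2 ^ (-(n:ℤ) - 1))) := by
    intro n
    rw [F_pt_s8 t ht0 n]
    have : (3:ℝ)/2 * (2:ℝ) ^ (-(n:ℤ)) = 3 * 2 ^ (-(n:ℤ) - 1) := by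
      rw [zpow_sub₀ (by norm_num : (2:ℝ) ≠ 0)]; ring
    rw [← this]
  have hFtendsto : Tendsto (fun n : ℕ => F (pt t (3 * 2 ^ (-(n:ℤ) - 1)))) atTop
      (𝓝 (pt3 t 0 0)) := by
    have := (hcont3.tendsto 0).comp seq_tendsto
    simp only [Function.comp_def, hval] at this
    simpa using this
  refine ⟨?_, ?_, ?_, ?_⟩
  · intro n
    have hx0 : (pt t (3 * 2 ^ (-(n:ℤ) - 1))) 0 = t := rfl
    have hx1 : (pt t (3 * 2 ^ (-(n:ℤ) - 1))) 1 = 3 * 2 ^ (-(n:ℤ) - 1) := rfl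
    constructor
    · refine ⟨⟨by linarith, ht1⟩, ?_⟩
      rw [hx1]
      constructor
      · positivity
      · have h5 : (3:ℝ) * 2 ^ (-(n:ℤ) - 1) ≤ 3 * 2 ^ (-1 : ℤ) := by
          gcongr <;> norm_num
        have h6 : (3:ℝ) * 2 ^ (-1 : ℤ) = 3/2 := by norm_num
        rw [h6] at h5
        linarith
    · simp only [mem_iUnion, mem_setOf_eq, not_exists, not_and]
      intro j _
      rw [hx1]
      intro h
      have h2 : (3:ℝ) * 2 ^ (-(n:ℤ) - 1) * 2 ^ ((n:ℤ) + 1) = 2 ^ (-(j:ℤ)) * 2 ^ ((n:ℤ) + 1) := by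
        rw [h]
      rw [mul_assoc, ← zpow_add₀ (by norm_num : (2:ℝ) ≠ 0),
        ← zpow_add₀ (by norm_num : (2:ℝ) ≠ 0)] at h2
      simp only [show -(n:ℤ) - 1 + ((n:ℤ) + 1) = 0 by ring, zpow_zero, mul_one] at h2
      have h3 : (3:ℝ) = 2 ^ ((n:ℤ) + 1 - j) := by
        rw [show (n:ℤ) + 1 - j = -(j:ℤ) + ((n:ℤ) + 1) by ring]
        exact h2
      rcases le_or_gt ((j:ℤ)) (n+1) with hj | hj
      · have : ∃ k : ℕ, (n:ℤ) + 1 - j = k := ⟨((n:ℤ)+1-j).toNat, by omega⟩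
        obtain ⟨k, hk⟩ := this
        rw [hk, zpow_natCast] at h3
        have : (3:ℕ) = 2 ^ k := by exact_mod_cast h3
        rcases k with _ | _ | k
        · simp at this
        · simp at this
        · have : 4 ≤ 2 ^ (k+2) := by
            calc 4 = 2^2 := by norm_num
            _ ≤ 2^(k+2) := Nat.pow_le_pow_right (by norm_num) (by omega)
          omega
      · have : (2:ℝ) ^ ((n:ℤ) + 1 - j) ≤ 2 ^ (-1 : ℤ) :=
          zpow_le_zpow_right₀ (by norm_num) (by omega)
        rw [← h3] at this
        norm_num at this
  · intro ε hε
    have hC : CauchySeq (fun n : ℕ => F (pt t (3 * 2 ^ (-(n:ℤ) - 1)))) :=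
      hFtendsto.cauchySeq
    rw [Metric.cauchySeq_iff] at hC
    obtain ⟨N, hN⟩ := hC ε hε
    exact ⟨N, fun m hm n hn => hN m hm n hn⟩
  · have hcont2 : Continuous (fun s : ℝ => pt t s) := by
      apply Continuous.comp (PiLp.continuous_toLp 2 (fun _ : Fin 2 => ℝ))
      apply continuous_pi
      intro i
      fin_cases i <;> simp <;> fun_prop
    have hs : Tendsto (fun n : ℕ => (3:ℝ) * 2 ^ (-(n:ℤ) - 1)) atTop (𝓝 0) := by
      have heq : (fun n : ℕ => (3:ℝ) * 2 ^ (-(n:ℤ) - 1)) =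
          fun n : ℕ => (3/2 : ℝ) * (2:ℝ) ^ (-(n:ℤ)) := by
        funext n; rw [zpow_sub₀ (by norm_num : (2:ℝ) ≠ 0)]; ring
      rw [heq]
      simpa using seq_tendsto.const_mul (3/2 : ℝ)
    have := (hcont2.tendsto 0).comp hs
    simpa [Function.comp_def] using this
  · exact ⟨⟨ht0, ht1.le⟩, rfl⟩
end
end

section
/- Any connected subset E of the comb Ψ containing two points lying in different gaps between teeth must reach the left half of the comb: if x = (x₁,x₂) ∈ E with 2^{-j} < x₂ < 2^{1-j} and x₁ > 0, and y = (y₁,y₂) ∈ E with 2^{-k} < y₂ < 2^{1-k} and y₁ > 0, where j ≠ k, then E contains a point with first coordinate ≤ 0. -/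
noncomputable section
open Set Metric Filter Topology

theorem connected_set_reaches_left (E : Set E2) (hE : E ⊆ Psi) (hconn : IsConnected E)
    (j k : ℕ) (hjk : j ≠ k)
    (x : E2) (hxE : x ∈ E) (hx0 : 0 < x 0)
    (hx1 : x 1 ∈ Ioo ((2:ℝ) ^ (-(j:ℤ))) ((2:ℝ) ^ (1 - (j:ℤ))))
    (y : E2) (hyE : y ∈ E) (hy0 : 0 < y 0)
    (hy1 : y 1 ∈ Ioo ((2:ℝ) ^ (-(k:ℤ))) ((2:ℝ) ^ (1 - (k:ℤ)))) :
    ∃ z ∈ E, z 0 ≤ 0 := by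
  by_contra h
  push_neg at h
  set m := min j k with hm
  set c : ℝ := 2 ^ (-(m:ℤ)) with hc
  have hcover : ∀ p ∈ E, p 1 ≠ c := by
    intro p hp hpc
    have hPsi := hE hp
    have hp0 : 0 < p 0 := h p hp
    have hp1 : p 0 < 1 := hPsi.1.1.2
    exact hPsi.2 (mem_iUnion.2 ⟨m, ⟨hp0.le, hp1.le⟩, hpc⟩)
  have hkey : (c < x 1 ∧ y 1 < c) ∨ (c < y 1 ∧ x 1 < c) := by
    rcases hjk.lt_or_gt with hlt | hlt
    · left
      have hmj : m = j := min_eq_left hlt.le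
      refine ⟨by rw [hc, hmj]; exact hx1.1, ?_⟩
      calc y 1 < 2 ^ (1 - (k:ℤ)) := hy1.2
        _ ≤ 2 ^ (-(j:ℤ)) := by
            apply zpow_le_zpow_right₀ (by norm_num : (1:ℝ) ≤ 2); omega
        _ = c := by rw [hc, hmj]
    · right
      have hmk : m = k := min_eq_right hlt.le
      refine ⟨by rw [hc, hmk]; exact hy1.1, ?_⟩
      calc x 1 < 2 ^ (1 - (j:ℤ)) := hx1.2
        _ ≤ 2 ^ (-(k:ℤ)) := by
            apply zpow_le_zpow_right₀ (by norm_num : (1:ℝ) ≤ 2); omega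
        _ = c := by rw [hc, hmk]
  have hcont : Continuous (fun p : E2 => p 1) :=
    (EuclideanSpace.proj (1 : Fin 2)).continuous
  have hU : IsOpen {p : E2 | c < p 1} := isOpen_lt continuous_const hcont
  have hV : IsOpen {p : E2 | p 1 < c} := isOpen_lt hcont continuous_const
  have hsub : E ⊆ {p : E2 | c < p 1} ∪ {p : E2 | p 1 < c} := by
    intro p hp
    rcases (hcover p hp).lt_or_gt with h1 | h1
    · exact Or.inr h1
    · exact Or.inl h1
  rcases hkey with ⟨hxU, hyV⟩ | ⟨hyU, hxV⟩
  · obtain ⟨p, -, hpU, hpV⟩ :=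
      hconn.isPreconnected {p : E2 | c < p 1} {p : E2 | p 1 < c} hU hV hsub
        ⟨x, hxE, hxU⟩ ⟨y, hyE, hyV⟩
    exact lt_asymm (show c < p 1 from hpU) (show p 1 < c from hpV)
  · obtain ⟨p, -, hpU, hpV⟩ :=
      hconn.isPreconnected {p : E2 | c < p 1} {p : E2 | p 1 < c} hU hV hsub
        ⟨y, hyE, hyU⟩ ⟨x, hxE, hxV⟩
    exact lt_asymm (show c < p 1 from hpU) (show p 1 < c from hpV)
end
end

section
/- Continuous majorant touching at a point of continuity: let (K,d) be a compact metric space, k : K → ℝ a bounded function, and x₀ ∈ K a point at which k is upper semicontinuous. Then there exists a continuous function ψ : K → ℝ such that ψ ≥ k on K and ψ(x₀) = k(x₀). -/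
noncomputable section
open Set Metric Filter Topology

theorem continuous_majorant_touching {K : Type*} [MetricSpace K] [CompactSpace K]
    (k : K → ℝ) (hbdd : ∃ M : ℝ, ∀ x, |k x| ≤ M) (x₀ : K)
    (husc : UpperSemicontinuousAt k x₀) :
    ∃ ψ : K → ℝ, Continuous ψ ∧ (∀ x, k x ≤ ψ x) ∧ ψ x₀ = k x₀ := by
  classical
  obtain ⟨M, hM⟩ := hbdd
  have hM0 : 0 ≤ M := le_trans (abs_nonneg _) (hM x₀)
  -- choose δ n
  have hδex : ∀ n : ℕ, ∃ δ : ℝ, 0 < δ ∧ δ ≤ (1/2 : ℝ)^n ∧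
      ∀ x, dist x x₀ < δ → k x < k x₀ + (1/2 : ℝ)^n := by
    intro n
    have hpos : (0:ℝ) < (1/2)^n := by positivity
    have := husc (k x₀ + (1/2 : ℝ)^n) (by linarith)
    rw [Metric.eventually_nhds_iff] at this
    obtain ⟨ε, hε, hball⟩ := this
    refine ⟨min ε ((1/2)^n), lt_min hε hpos, min_le_right _ _, fun x hx => ?_⟩
    exact hball (lt_of_lt_of_le hx (min_le_left _ _))
  choose δ hδpos hδle hδ using hδex
  set f : ℕ → K → ℝ := fun n x => (1/2 : ℝ)^n * min (dist x x₀ / δ (n+1)) 1 with hf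
  have hf_nonneg : ∀ n x, 0 ≤ f n x := by
    intro n x
    have : (0:ℝ) ≤ min (dist x x₀ / δ (n+1)) 1 :=
      le_min (div_nonneg dist_nonneg (hδpos _).le) one_pos.le
    positivity
  have hf_le : ∀ n x, ‖f n x‖ ≤ (1/2 : ℝ)^n := by
    intro n x
    rw [Real.norm_eq_abs, abs_of_nonneg (hf_nonneg n x)]
    have h1 : min (dist x x₀ / δ (n+1)) 1 ≤ 1 := min_le_right _ _
    have hpos : (0:ℝ) ≤ (1/2:ℝ)^n := by positivity
    calc (1/2 : ℝ)^n * min (dist x x₀ / δ (n+1)) 1 ≤ (1/2 : ℝ)^n * 1 :=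
          mul_le_mul_of_nonneg_left h1 hpos
      _ = (1/2 : ℝ)^n := mul_one _
  have hsum_geom : Summable (fun n : ℕ => (1/2 : ℝ)^n) :=
    summable_geometric_of_lt_one (by norm_num) (by norm_num)
  have hf_summable : ∀ x, Summable (fun n => f n x) := by
    intro x
    exact Summable.of_nonneg_of_le (fun n => hf_nonneg n x)
      (fun n => by simpa [Real.norm_eq_abs, abs_of_nonneg (hf_nonneg n x)] using hf_le n x)
      hsum_geom
  set ψ : K → ℝ := fun x =>
    k x₀ + 2*M * min (dist x x₀ / δ 0) 1 + ∑' n, f n x with hψ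
  refine ⟨ψ, ?_, ?_, ?_⟩
  · -- continuity
    have hc1 : Continuous fun x : K => k x₀ + 2*M * min (dist x x₀ / δ 0) 1 := by
      fun_prop
    have hc2 : Continuous fun x : K => ∑' n, f n x := by
      refine continuous_tsum (fun n => ?_) hsum_geom hf_le
      fun_prop
    exact hc1.add hc2
  · -- majorant
    intro x
    have htsum_nonneg : 0 ≤ ∑' n, f n x := tsum_nonneg (fun n => hf_nonneg n x)
    have hmid_nonneg : 0 ≤ 2*M * min (dist x x₀ / δ 0) 1 := by
      have : (0:ℝ) ≤ min (dist x x₀ / δ 0) 1 :=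
        le_min (div_nonneg dist_nonneg (hδpos _).le) one_pos.le
      positivity
    rcases eq_or_lt_of_le (dist_nonneg : (0:ℝ) ≤ dist x x₀) with hd | hd
    · -- x = x₀
      have hx : x = x₀ := by
        rw [← dist_le_zero]; exact le_of_eq hd.symm
      subst hx
      simp only [hψ]
      linarith
    · rcases le_or_gt (δ 0) (dist x x₀) with h0 | h0
      · -- far case: middle term is 2M
        have hmin : min (dist x x₀ / δ 0) 1 = 1 :=
          min_eq_right ((one_le_div (hδpos 0)).mpr h0)
        have hk : k x ≤ k x₀ + 2*M := by
          have h1 := (abs_le.mp (hM x)).2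
          have h2 := (abs_le.mp (hM x₀)).1
          linarith
        simp only [hψ, hmin]
        linarith
      · -- near case
        have hex : ∃ n, δ n ≤ dist x x₀ := by
          obtain ⟨n, hn⟩ := exists_pow_lt_of_lt_one hd (by norm_num : (1/2 : ℝ) < 1)
          exact ⟨n, le_of_lt (lt_of_le_of_lt (hδle n) hn)⟩
        set n := Nat.find hex with hn
        have hnle : δ n ≤ dist x x₀ := Nat.find_spec hex
        have hnpos : n ≠ 0 := by
          intro h
          rw [h] at hnle
          exact absurd hnle (not_le.mpr h0)
        obtain ⟨m, hm⟩ : ∃ m, n = m + 1 := ⟨n - 1, (Nat.succ_pred_eq_of_ne_zero hnpos).symm⟩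
        have hdm : dist x x₀ < δ m := by
          have := Nat.find_min hex (by omega : m < n)
          exact not_le.mp this
        have hkx : k x < k x₀ + (1/2 : ℝ)^m := hδ m x hdm
        have hfm : f m x = (1/2 : ℝ)^m := by
          have : min (dist x x₀ / δ (m+1)) 1 = 1 := by
            refine min_eq_right ((one_le_div (hδpos (m+1))).mpr ?_)
            rw [← hm]; exact hnle
          simp [hf, this]
        have hle_tsum : f m x ≤ ∑' i, f i x :=
          Summable.le_tsum (hf_summable x) m (fun i _ => hf_nonneg i x)
        rw [hfm] at hle_tsum
        simp only [hψ]
        linarith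
  · -- touching
    simp only [hψ, dist_self]
    have : ∀ n, f n x₀ = 0 := by
      intro n
      simp [hf, dist_self, zero_div, (hδpos (n+1)).ne']
    rw [tsum_congr this]
    simp
end
end
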